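/- Let φ(u) be a monic polynomial of degree m over CZ_n whose scalar-part polynomial f = ⟨φ⟩_0 has m distinct simple complex zeros. Then φ has exactly m zeros in CZ_n. -/
import Mathlib


noncomputable section

/-- The ideal of squares of generators defining the zeon algebra. -/
def zeonIdeal (n : ℕ) : Ideal (MvPolynomial (Fin n) ℂ) :=
  Ideal.span (Set.range fun i : Fin n => (MvPolynomial.X i : MvPolynomial (Fin n) ℂ) ^ 2)

/-- The `n`-particle complex zeon algebra `CZ_n`. -/
abbrev Zeon (n : ℕ) := MvPolynomial (Fin n) ℂ ⧸ zeonIdeal n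

/-- The scalar part `⟨u⟩₀` of a zeon, as a `ℂ`-algebra homomorphism. -/
def scalarPart (n : ℕ) : Zeon n →ₐ[ℂ] ℂ :=
  Ideal.Quotient.liftₐ (zeonIdeal n) (MvPolynomial.aeval fun _ => (0 : ℂ)) (by
    intro a ha
    have h : zeonIdeal n ≤ RingHom.ker
        (MvPolynomial.aeval (R := ℂ) fun _ : Fin n => (0 : ℂ)).toRingHom := by
      rw [zeonIdeal, Ideal.span_le]
      rintro _ ⟨i, rfl⟩
      simp [RingHom.mem_ker]
    exact h ha)

/-- The dual (nilpotent) part `Du = u - ⟨u⟩₀`. -/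
def dualPart (n : ℕ) (u : Zeon n) : Zeon n := u - algebraMap ℂ (Zeon n) (scalarPart n u)

/-- The generator `ζ_i`. -/
def zeta (n : ℕ) (i : Fin n) : Zeon n := Ideal.Quotient.mk _ (MvPolynomial.X i)

/-- The basis blade `ζ_I`. -/
def blade (n : ℕ) (I : Finset (Fin n)) : Zeon n :=
  Ideal.Quotient.mk _ (∏ i ∈ I, MvPolynomial.X i)

section Aux

variable {n : ℕ}

lemma scalarPart_mk (p : MvPolynomial (Fin n) ℂ) :
    scalarPart n (Ideal.Quotient.mk _ p) = MvPolynomial.aeval (fun _ => (0 : ℂ)) p := rfl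

lemma isNilpotent_of_scalarPart_eq_zero {u : Zeon n} (h : scalarPart n u = 0) :
    IsNilpotent u := by
  obtain ⟨p, rfl⟩ := Ideal.Quotient.mk_surjective (I := zeonIdeal n) u
  rw [scalarPart_mk, MvPolynomial.aeval_zero'] at h
  have hc : MvPolynomial.constantCoeff p = 0 := by simpa using h
  have hmem : p ∈ Ideal.span (MvPolynomial.X '' (Set.univ : Set (Fin n))) := by
    rw [MvPolynomial.mem_ideal_span_X_image]
    intro d hd
    by_contra hno
    push_neg at hno
    have hd0 : d = 0 := by
      ext i
      simpa using hno i (Set.mem_univ i)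
    rw [hd0] at hd
    rw [MvPolynomial.mem_support_iff] at hd
    exact hd (by simpa [MvPolynomial.constantCoeff_eq] using hc)
  have hrad : Ideal.span (MvPolynomial.X '' (Set.univ : Set (Fin n)))
      ≤ (zeonIdeal n).radical := by
    rw [Ideal.span_le]
    rintro _ ⟨i, -, rfl⟩
    exact ⟨2, Ideal.subset_span ⟨i, rfl⟩⟩
  obtain ⟨k, hk⟩ := hrad hmem
  exact ⟨k, by rw [← map_pow, Ideal.Quotient.eq_zero_iff_mem]; exact hk⟩

lemma isUnit_of_scalarPart_ne_zero {u : Zeon n} (h : scalarPart n u ≠ 0) : IsUnit u := by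
  have hnil : IsNilpotent (dualPart n u) := by
    apply isNilpotent_of_scalarPart_eq_zero
    simp [dualPart, AlgHom.commutes]
  have hu : IsUnit (algebraMap ℂ (Zeon n) (scalarPart n u)) :=
    (isUnit_iff_ne_zero.mpr h).map (algebraMap ℂ (Zeon n))
  have h1 : u = algebraMap ℂ (Zeon n) (scalarPart n u) + dualPart n u := by
    rw [dualPart]; ring
  rw [h1]
  exact hnil.isUnit_add_left_of_commute hu (Commute.all _ _)

lemma scalarPart_eval (φ : Polynomial (Zeon n)) (u : Zeon n) :
    scalarPart n (φ.eval u) = (φ.map (scalarPart n).toRingHom).eval (scalarPart n u) := by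
  rw [Polynomial.eval_map]
  exact (Polynomial.eval₂_hom (scalarPart n).toRingHom u).symm

lemma root_unique (φ : Polynomial (Zeon n)) {u v : Zeon n}
    (hu : φ.eval u = 0) (hv : φ.eval v = 0) (hs : scalarPart n u = scalarPart n v)
    (hd : scalarPart n (φ.derivative.eval u) ≠ 0) : u = v := by
  obtain ⟨k, hk⟩ := φ.binomExpansion u (v - u)
  rw [add_sub_cancel, hv, hu, zero_add] at hk
  have hsvu : scalarPart n (v - u) = 0 := by rw [map_sub, hs, sub_self]
  have hunit : IsUnit (φ.derivative.eval u + k * (v - u)) := by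
    apply isUnit_of_scalarPart_ne_zero
    simpa [map_add, map_mul, hsvu] using hd
  have h0 : (φ.derivative.eval u + k * (v - u)) * (v - u) = 0 := by
    linear_combination -hk
  have := (hunit.mul_right_eq_zero).mp h0
  linear_combination -this

lemma root_exists (φ : Polynomial (Zeon n)) :
    ∀ k : ℕ, ∀ u : Zeon n, (φ.eval u) ^ k = 0 →
      scalarPart n (φ.derivative.eval u) ≠ 0 →
      ∃ v, φ.eval v = 0 ∧ scalarPart n v = scalarPart n u := by
  intro k
  induction k using Nat.strong_induction_on with
  | _ k ih =>
    intro u hk hd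
    match k, hk with
    | 0, hk =>
      exfalso
      rw [pow_zero] at hk
      have : (1 : ℂ) = 0 := by
        simpa using congrArg (scalarPart n) hk
      exact one_ne_zero this
    | 1, hk =>
      exact ⟨u, by simpa using hk, rfl⟩
    | (k + 2), hk =>
      have hse : scalarPart n (φ.eval u) = 0 := by
        have : (scalarPart n (φ.eval u)) ^ (k + 2) = 0 := by
          rw [← map_pow, hk, map_zero]
        exact pow_eq_zero_iff (by omega) |>.mp this
      have hder : IsUnit (φ.derivative.eval u) := isUnit_of_scalarPart_ne_zero hd
      obtain ⟨c, hc⟩ : ∃ c, c * φ.derivative.eval u = 1 := by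
        obtain ⟨w, hw⟩ := hder
        exact ⟨↑w⁻¹, by rw [← hw]; exact w.inv_mul⟩
      obtain ⟨r, hr⟩ := φ.binomExpansion u (-(c * φ.eval u))
      have heval : φ.eval (u + -(c * φ.eval u)) = r * c ^ 2 * (φ.eval u) ^ 2 := by
        rw [hr]
        linear_combination (-(φ.eval u)) * hc
      have hsu' : scalarPart n (u + -(c * φ.eval u)) = scalarPart n u := by
        simp [map_mul, hse]
      have hd' : scalarPart n (φ.derivative.eval (u + -(c * φ.eval u))) ≠ 0 := by
        rw [scalarPart_eval, hsu', ← scalarPart_eval]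
        exact hd
      have hk' : (φ.eval (u + -(c * φ.eval u))) ^ (k + 1) = 0 := by
        rw [heval, mul_pow, ← pow_mul]
        have h2 : (φ.eval u) ^ (2 * (k + 1)) = 0 := by
          have he2 : 2 * (k + 1) = (k + 2) + k := by omega
          rw [he2, pow_add, hk, zero_mul]
        rw [h2, mul_zero]
      obtain ⟨v, hv1, hv2⟩ := ih (k + 1) (by omega) _ hk' hd'
      exact ⟨v, hv1, by rw [hv2, hsu']⟩

end Aux

/-- if the scalar-part polynomial of a monic degree-`m` zeon polynomial
has `m` distinct (hence simple) complex zeros, then `φ` has exactly `m` zeon zeros. -/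
theorem stmt18 (n : ℕ) (m : ℕ) (φ : Polynomial (Zeon n)) (hmonic : φ.Monic)
    (hdeg : φ.natDegree = m)
    (hroots : (φ.map (scalarPart n).toRingHom).roots.toFinset.card = m) :
    {u : Zeon n | φ.eval u = 0}.ncard = m := by
  classical
  have hZnt : Nontrivial (Zeon n) := (scalarPart n).toRingHom.domain_nontrivial
  set f : Polynomial ℂ := φ.map (scalarPart n).toRingHom with hf
  have hfm : f.Monic := hmonic.map _
  have hfdeg : f.natDegree = m := by rw [hf, hmonic.natDegree_map]; exact hdeg
  rcases Nat.eq_zero_or_pos m with hm0 | hmpos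
  · -- degree 0 : φ = 1, no roots
    have hφ1 : φ = 1 := hmonic.natDegree_eq_zero.mp (hdeg.trans hm0)
    have : {u : Zeon n | φ.eval u = 0} = ∅ := by
      ext u
      simp [hφ1]
    rw [this, hm0, Set.ncard_empty]
  · -- main case
    have hfne : f ≠ 0 := hfm.ne_zero
    -- roots are simple
    have hcard_le : Multiset.card f.roots ≤ m := hfdeg ▸ f.card_roots'
    have hcard_ge : m ≤ Multiset.card f.roots := by
      rw [← hroots]; exact f.roots.toFinset_card_le
    have hnodup : f.roots.Nodup := by
      rw [← Multiset.toFinset_card_eq_card_iff_nodup]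
      rw [hroots]
      omega
    have hfd_ne : f.derivative ≠ 0 := by
      intro h0
      have := Polynomial.natDegree_eq_zero_of_derivative_eq_zero h0
      omega
    have hsimple : ∀ c ∈ f.roots.toFinset, f.derivative.eval c ≠ 0 := by
      intro c hc
      rw [Multiset.mem_toFinset] at hc
      have hroot : f.IsRoot c := Polynomial.isRoot_of_mem_roots hc
      have hmult1 : f.rootMultiplicity c = 1 := by
        rw [← Polynomial.count_roots]
        exact Multiset.count_eq_one_of_mem hnodup hc
      have : f.derivative.rootMultiplicity c = 0 := by
        rw [Polynomial.derivative_rootMultiplicity_of_root hroot, hmult1]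
      intro he
      have := Polynomial.rootMultiplicity_eq_zero_iff.mp this he
      exact hfd_ne this
    -- derivative condition transported to Zeon
    have hDcond : ∀ u : Zeon n, scalarPart n u ∈ f.roots.toFinset →
        scalarPart n (φ.derivative.eval u) ≠ 0 := by
      intro u hu
      rw [scalarPart_eval, ← Polynomial.derivative_map]
      exact hsimple _ hu
    -- existence of lifts
    have key : ∀ c ∈ f.roots.toFinset, ∃ v : Zeon n, φ.eval v = 0 ∧ scalarPart n v = c := by
      intro c hc
      rw [Multiset.mem_toFinset] at hc
      have hroot : f.eval c = 0 := Polynomial.isRoot_of_mem_roots hc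
      set u₀ : Zeon n := algebraMap ℂ (Zeon n) c with hu₀
      have hsu₀ : scalarPart n u₀ = c := (scalarPart n).commutes c
      have hse : scalarPart n (φ.eval u₀) = 0 := by
        rw [scalarPart_eval, hsu₀, ← hf, hroot]
      obtain ⟨k, hk⟩ := isNilpotent_of_scalarPart_eq_zero hse
      have hd : scalarPart n (φ.derivative.eval u₀) ≠ 0 :=
        hDcond u₀ (by rw [hsu₀, Multiset.mem_toFinset]; exact hc)
      obtain ⟨v, hv1, hv2⟩ := root_exists φ k u₀ hk hd
      exact ⟨v, hv1, by rw [hv2, hsu₀]⟩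
    -- choice of lifts
    set g : ℂ → Zeon n := fun c =>
      if h : c ∈ f.roots.toFinset then (key c h).choose else 0 with hg
    have hg_root : ∀ c ∈ f.roots.toFinset, φ.eval (g c) = 0 := by
      intro c hc
      rw [hg]
      simp only [hc, dif_pos]
      exact (key c hc).choose_spec.1
    have hg_scalar : ∀ c ∈ f.roots.toFinset, scalarPart n (g c) = c := by
      intro c hc
      rw [hg]
      simp only [hc, dif_pos]
      exact (key c hc).choose_spec.2
    -- scalar part of any root of φ is a root of f
    have hmem : ∀ u : Zeon n, φ.eval u = 0 → scalarPart n u ∈ f.roots.toFinset := by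
      intro u hu
      rw [Multiset.mem_toFinset, Polynomial.mem_roots hfne]
      have : f.eval (scalarPart n u) = 0 := by
        rw [hf, ← scalarPart_eval, hu, map_zero]
      exact this
    -- set equality
    have hset : {u : Zeon n | φ.eval u = 0} = g '' ↑(f.roots.toFinset) := by
      ext u
      constructor
      · intro hu
        have hc := hmem u hu
        refine ⟨scalarPart n u, hc, ?_⟩
        refine root_unique φ (hg_root _ hc) hu ?_ ?_
        · rw [hg_scalar _ hc]
        · apply hDcond
          rw [hg_scalar _ hc]
          exact hc
      · rintro ⟨c, hc, rfl⟩
        exact hg_root c hc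
    have hinj : Set.InjOn g ↑(f.roots.toFinset) := by
      intro a ha b hb hab
      rw [← hg_scalar a ha, ← hg_scalar b hb, hab]
    rw [hset, Set.ncard_image_of_injOn hinj, Set.ncard_coe_finset, hroots]
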